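/- For all real numbers r ∈ (0,1) and a > 0, one has (r−1)·(1−(a+1)^{−r})·log(a+1) − r·(a/(a+1))·(1−(a+1)^{1−r}) > 0. -/

import Mathlib

open Real in
private lemma G_hasDerivAt (r x : ℝ) (hx : 0 < x) :
    HasDerivAt (fun y : ℝ => r*(r-1)*Real.log y + (r-1)*(y^r - 1) + r*(1-r)*y
      - r*y^(r-1) + r^2)
      (r*(r-1)*x⁻¹ + (r-1)*(r*x^(r-1)) + r*(1-r) - r*((r-1)*x^(r-2))) x := by
  have h1 : HasDerivAt Real.log x⁻¹ x := Real.hasDerivAt_log hx.ne'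
  have h2 : HasDerivAt (fun y : ℝ => y ^ r) (r * x ^ (r-1)) x :=
    Real.hasDerivAt_rpow_const (Or.inl hx.ne')
  have h3 : HasDerivAt (fun y : ℝ => y ^ (r-1)) ((r-1) * x ^ (r-2)) x := by
    have := Real.hasDerivAt_rpow_const (x := x) (p := r-1) (Or.inl hx.ne')
    rwa [show r-1-1 = r-2 by ring] at this
  have h4 : HasDerivAt (fun y : ℝ => y) 1 x := hasDerivAt_id x
  have := (((h1.const_mul (r*(r-1))).add ((h2.sub_const 1).const_mul (r-1))).add
    ((h4.const_mul (r*(1-r))))).sub (h3.const_mul r) |>.add_const (r^2)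
  refine this.congr_deriv ?_
  ring

open Real in
private lemma G_pos (r x : ℝ) (hr0 : 0 < r) (hr1 : r < 1) (hx : 1 < x) :
    0 < r*(r-1)*Real.log x + (r-1)*(x^r - 1) + r*(1-r)*x - r*x^(r-1) + r^2 := by
  set G : ℝ → ℝ := fun y => r*(r-1)*Real.log y + (r-1)*(y^r - 1) + r*(1-r)*y
      - r*y^(r-1) + r^2 with hG
  have hmono : StrictMonoOn G (Set.Ici 1) := by
    apply strictMonoOn_of_deriv_pos (convex_Ici 1)
    · intro y hy
      exact (G_hasDerivAt r y (lt_of_lt_of_le one_pos hy)).continuousAt.continuousWithinAt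
    · intro y hy
      rw [interior_Ici] at hy
      have hy1 : (1:ℝ) < y := hy
      have hy0 : (0:ℝ) < y := lt_trans one_pos hy1
      rw [(G_hasDerivAt r y hy0).deriv]
      have key : r*(r-1)*y⁻¹ + (r-1)*(r*y^(r-1)) + r*(1-r) - r*((r-1)*y^(r-2))
          = r*(1-r) * ((y-1) * y⁻¹ * (1 - y^(r-1))) := by
        have e1 : y ^ (r-2) = y^(r-1) * y⁻¹ := by
          rw [show r-2 = (r-1) + (-1) by ring, Real.rpow_add hy0, Real.rpow_neg_one]
        rw [e1]
        field_simp
        ring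
      rw [key]
      have h1 : y^(r-1) < 1 := Real.rpow_lt_one_of_one_lt_of_neg hy1 (by linarith)
      have : 0 < y⁻¹ := inv_pos.mpr hy0
      have h2 : 0 < 1 - y^(r-1) := by linarith
      have h3 : 0 < r*(1-r) := by nlinarith
      have h4 : 0 < y - 1 := by linarith
      exact mul_pos h3 (mul_pos (mul_pos h4 this) h2)
  have h0 : G 1 = 0 := by
    simp [hG, Real.one_rpow, Real.log_one]
    ring
  have h := hmono (Set.self_mem_Ici) (le_of_lt hx) hx
  rw [h0] at h
  exact h
open Real in
private lemma F_hasDerivAt (r x : ℝ) (hx : 0 < x) :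
    HasDerivAt (fun y : ℝ => (r-1)*(1 - y^(-r))*Real.log y - r + r*y^(1-r)
      + r*y⁻¹ - r*y^(-r))
      (x^(-1-r) * (r*(r-1)*Real.log x + (r-1)*(x^r - 1) + r*(1-r)*x - r*x^(r-1) + r^2))
      x := by
  have h1 : HasDerivAt Real.log x⁻¹ x := Real.hasDerivAt_log hx.ne'
  have h2 : HasDerivAt (fun y : ℝ => y ^ (-r)) (-r * x ^ (-r-1)) x :=
    Real.hasDerivAt_rpow_const (Or.inl hx.ne')
  have h3 : HasDerivAt (fun y : ℝ => y ^ (1-r)) ((1-r) * x ^ (-r)) x := by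
    have := Real.hasDerivAt_rpow_const (x := x) (p := 1-r) (Or.inl hx.ne')
    rwa [show 1-r-1 = -r by ring] at this
  have h4 : HasDerivAt (fun y : ℝ => y⁻¹) (-(x^2)⁻¹) x := hasDerivAt_inv hx.ne'
  have H := (((((((h2.const_sub 1).mul h1).const_mul (r-1)).sub_const r).add
    (h3.const_mul r)).add (h4.const_mul r)).sub (h2.const_mul r))
  refine (H.congr_of_eventuallyEq (Filter.Eventually.of_forall fun y => ?_)).congr_deriv ?_
  · simp only [Pi.add_apply, Pi.sub_apply, Pi.mul_apply]; ring
  -- algebra with rpow identities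
  set A := x^(-1-r) with hA
  set B := x^r with hB
  have hA0 : 0 < A := Real.rpow_pos_of_pos hx _
  have e1 : x^(-r-1) = A := by rw [hA, show -r-1 = -1-r by ring]
  have e2 : x^(-r) = A * x := by
    rw [hA, show -r = (-1-r)+1 by ring, Real.rpow_add hx, Real.rpow_one]
  have e3 : x^(r-1) = B * x⁻¹ := by
    rw [hB, show r-1 = r + (-1) by ring, Real.rpow_add hx, Real.rpow_neg_one]
  have e4 : A * B = x⁻¹ := by
    rw [hA, hB, ← Real.rpow_add hx, show -1-r+r = -1 by ring, Real.rpow_neg_one]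
  have eB : B = x⁻¹ * A⁻¹ := by
    field_simp at e4 ⊢
    linarith [e4]
  have hx' : x ≠ 0 := hx.ne'
  rw [e1, e2, e3, eB]
  field_simp
  ring
open Real in
private lemma F_pos (r x : ℝ) (hr0 : 0 < r) (hr1 : r < 1) (hx : 1 < x) :
    0 < (r-1)*(1 - x^(-r))*Real.log x - r + r*x^(1-r) + r*x⁻¹ - r*x^(-r) := by
  set F : ℝ → ℝ := fun y => (r-1)*(1 - y^(-r))*Real.log y - r + r*y^(1-r)
      + r*y⁻¹ - r*y^(-r) with hF
  have hmono : StrictMonoOn F (Set.Ici 1) := by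
    apply strictMonoOn_of_deriv_pos (convex_Ici 1)
    · intro y hy
      exact (F_hasDerivAt r y (lt_of_lt_of_le one_pos hy)).continuousAt.continuousWithinAt
    · intro y hy
      rw [interior_Ici] at hy
      have hy1 : (1:ℝ) < y := hy
      have hy0 : (0:ℝ) < y := lt_trans one_pos hy1
      rw [(F_hasDerivAt r y hy0).deriv]
      exact mul_pos (Real.rpow_pos_of_pos hy0 _) (G_pos r y hr0 hr1 hy1)
  have h0 : F 1 = 0 := by
    simp [hF, Real.one_rpow, Real.log_one]
  have h := hmono (Set.self_mem_Ici) (le_of_lt hx) hx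
  rw [h0] at h
  exact h

/-- For `r ∈ (0,1)` and `a > 0`:
`(r−1)(1−(a+1)^{−r})·log(a+1) − r·(a/(a+1))·(1−(a+1)^{1−r}) > 0`. -/
theorem claim_elem (r a : ℝ) (hr : r ∈ Set.Ioo (0 : ℝ) 1) (ha : 0 < a) :
    0 < (r - 1) * (1 - (a + 1) ^ (-r)) * Real.log (a + 1)
      - r * (a / (a + 1)) * (1 - (a + 1) ^ (1 - r)) := by
  obtain ⟨hr0, hr1⟩ := hr
  have ht : (1:ℝ) < a + 1 := by linarith
  have ht0 : (0:ℝ) < a + 1 := by linarith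
  have key := F_pos r (a+1) hr0 hr1 ht
  have e1 : (a+1)^(1-r) = (a+1) * (a+1)^(-r) := by
    rw [show 1-r = 1 + (-r) by ring, Real.rpow_add ht0, Real.rpow_one]
  rw [e1] at key ⊢
  have ht' : a + 1 ≠ 0 := ht0.ne'
  field_simp at key ⊢
  linarith [key]
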